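/- A fan polygon has a nonempty kernel containing one of its vertices: if P is an orthoconvex compact region whose bounding box B satisfies that two adjacent edges of B (say the bottom edge and the left edge) are contained in P, then the corner point v of B common to those two edges belongs to P and every point of P is r-visible from v. -/
import Mathlib


/-- The axis-aligned rectangle spanned by two points of the plane. -/
def spanRect (p q : ℝ × ℝ) : Set (ℝ × ℝ) :=
  Set.Icc (min p.1 q.1) (max p.1 q.1) ×ˢ Set.Icc (min p.2 q.2) (max p.2 q.2)

/-- On a preconnected set where the first coordinate is fixed, the second
coordinate takes intermediate values. -/
lemma vert_intermediate {S : Set (ℝ × ℝ)} (hS : IsPreconnected S) {c u w t : ℝ}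
    (hfix : ∀ z ∈ S, z.1 = c) (hu : (c, u) ∈ S) (hw : (c, w) ∈ S)
    (h1 : u ≤ t) (h2 : t ≤ w) : (c, t) ∈ S := by
  have himg : IsPreconnected (Prod.snd '' S) :=
    hS.image Prod.snd continuous_snd.continuousOn
  have hoc := himg.ordConnected
  have ht : t ∈ Prod.snd '' S :=
    hoc.out ⟨(c, u), hu, rfl⟩ ⟨(c, w), hw, rfl⟩ ⟨h1, h2⟩
  obtain ⟨z, hz, hzt⟩ := ht
  have : z = (c, t) := Prod.ext (hfix z hz) hzt
  rwa [this] at hz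

/-- Horizontal version. -/
lemma horiz_intermediate {S : Set (ℝ × ℝ)} (hS : IsPreconnected S) {c u w t : ℝ}
    (hfix : ∀ z ∈ S, z.2 = c) (hu : (u, c) ∈ S) (hw : (w, c) ∈ S)
    (h1 : u ≤ t) (h2 : t ≤ w) : (t, c) ∈ S := by
  have himg : IsPreconnected (Prod.fst '' S) :=
    hS.image Prod.fst continuous_fst.continuousOn
  have hoc := himg.ordConnected
  have ht : t ∈ Prod.fst '' S :=
    hoc.out ⟨(u, c), hu, rfl⟩ ⟨(w, c), hw, rfl⟩ ⟨h1, h2⟩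
  obtain ⟨z, hz, hzt⟩ := ht
  have : z = (t, c) := Prod.ext hzt (hfix z hz)
  rwa [this] at hz

/-- A fan polygon has a nonempty kernel containing a vertex: if an
orthoconvex compact region `P` contains the bottom and left edges of its bounding box
`[x₁,x₂] × [y₁,y₂]`, then the corner `(x₁,y₁)` belongs to `P` and r-sees all of `P`. -/
theorem fan_polygon_corner_in_kernel (P : Set (ℝ × ℝ)) (hP : IsCompact P)
    (hne : P.Nonempty)
    (hxconv : ∀ y : ℝ, IsPreconnected {p : ℝ × ℝ | p ∈ P ∧ p.2 = y})
    (hyconv : ∀ x : ℝ, IsPreconnected {p : ℝ × ℝ | p ∈ P ∧ p.1 = x})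
    (x₁ x₂ y₁ y₂ : ℝ)
    (hbox : P ⊆ Set.Icc x₁ x₂ ×ˢ Set.Icc y₁ y₂)
    (hx₁ : IsLeast (Prod.fst '' P) x₁) (hx₂ : IsGreatest (Prod.fst '' P) x₂)
    (hy₁ : IsLeast (Prod.snd '' P) y₁) (hy₂ : IsGreatest (Prod.snd '' P) y₂)
    (hbot : Set.Icc x₁ x₂ ×ˢ ({y₁} : Set ℝ) ⊆ P)
    (hleft : ({x₁} : Set ℝ) ×ˢ Set.Icc y₁ y₂ ⊆ P) :
    (x₁, y₁) ∈ P ∧ ∀ p ∈ P, spanRect (x₁, y₁) p ⊆ P := by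
  obtain ⟨p0, hp0⟩ := hne
  have hx12 : x₁ ≤ x₂ := le_trans (hx₁.2 ⟨p0, hp0, rfl⟩) (hx₂.2 ⟨p0, hp0, rfl⟩)
  have hy12 : y₁ ≤ y₂ := le_trans (hy₁.2 ⟨p0, hp0, rfl⟩) (hy₂.2 ⟨p0, hp0, rfl⟩)
  have hcorner : (x₁, y₁) ∈ P := hbot ⟨⟨le_refl x₁, hx12⟩, rfl⟩
  refine ⟨hcorner, ?_⟩
  intro p hp q hq
  obtain ⟨hpb, hpb2⟩ := hbox hp
  have hpx1 : x₁ ≤ p.1 := hpb.1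
  have hpy1 : y₁ ≤ p.2 := hpb2.1
  rw [spanRect] at hq
  obtain ⟨hq1, hq2⟩ := hq
  simp only [min_eq_left hpx1, max_eq_right hpx1] at hq1
  simp only [min_eq_left hpy1, max_eq_right hpy1] at hq2
  -- Step 1: (p.1, q.2) ∈ P via the vertical line x = p.1
  have hbotp : (p.1, y₁) ∈ P := hbot ⟨⟨hpx1, hpb.2⟩, rfl⟩
  have hstep1 : (p.1, q.2) ∈ {z : ℝ × ℝ | z ∈ P ∧ z.1 = p.1} := by
    refine vert_intermediate (hyconv p.1) (fun z hz => hz.2) ⟨hbotp, rfl⟩ ?_ hq2.1 hq2.2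
    exact ⟨(Prod.mk.eta ▸ hp : (p.1, p.2) ∈ P), rfl⟩
  -- Step 2: (q.1, q.2) ∈ P via the horizontal line y = q.2
  have hlq : (x₁, q.2) ∈ P :=
    hleft ⟨rfl, hq2.1, hq2.2.trans hpb2.2⟩
  have hstep2 : (q.1, q.2) ∈ {z : ℝ × ℝ | z ∈ P ∧ z.2 = q.2} :=
    horiz_intermediate (hxconv q.2) (fun z hz => hz.2) ⟨hlq, rfl⟩ ⟨hstep1.1, rfl⟩ hq1.1 hq1.2
  have : q = (q.1, q.2) := rfl
  rw [this]
  exact hstep2.1
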